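/- For every finite connected simple graph G, the maximum number of completely independent spanning trees in G is at most ⌊|V(G)|/γ_c(G)⌋; that is, τ*(G) ≤ ⌊|V(G)|/γ_c(G)⌋. -/

import Mathlib

namespace CISTPaper

open SimpleGraph

variable {V : Type*} {W : Type*}

/-- `T` is a spanning tree of `G` (both graphs on the same vertex type). -/
def IsSpanningTree (G T : SimpleGraph V) : Prop :=
  T ≤ G ∧ T.IsTree

/-- The set of internal vertices of a graph: vertices of degree at least 2. -/
def internalVerts (T : SimpleGraph V) : Set V :=
  {v | 2 ≤ (T.neighborSet v).ncard}

/-- `G` has `k` completely independent spanning trees: pairwise edge-disjoint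
spanning trees whose sets of internal vertices are pairwise disjoint. -/
def HasCIST (G : SimpleGraph V) (k : ℕ) : Prop :=
  ∃ T : Fin k → SimpleGraph V,
    (∀ i, IsSpanningTree G (T i)) ∧
    ∀ i j, i ≠ j →
      Disjoint (T i).edgeSet (T j).edgeSet ∧
      Disjoint (internalVerts (T i)) (internalVerts (T j))

/-- `τ*(G)`: the maximum number of completely independent spanning trees of `G`. -/
noncomputable def tauStar (G : SimpleGraph V) : ℕ :=
  sSup {k | HasCIST G k}

/-- `G` has `k` pairwise edge-disjoint spanning trees. -/
def HasEDST (G : SimpleGraph V) (k : ℕ) : Prop :=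
  ∃ T : Fin k → SimpleGraph V,
    (∀ i, IsSpanningTree G (T i)) ∧
    ∀ i j, i ≠ j → Disjoint (T i).edgeSet (T j).edgeSet

/-- `τ(G)`: the maximum number of pairwise edge-disjoint spanning trees of `G`. -/
noncomputable def tau (G : SimpleGraph V) : ℕ :=
  sSup {k | HasEDST G k}

/-- The minimum degree `δ(G)`. -/
noncomputable def minDeg (G : SimpleGraph V) : ℕ :=
  sInf (Set.range fun v => (G.neighborSet v).ncard)

/-- `H` is `k`-connected: `H` has more than `k` vertices and deleting any set of
fewer than `k` vertices leaves `H` connected. -/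
def IsKConnected (H : SimpleGraph W) (k : ℕ) : Prop :=
  k < Nat.card W ∧ ∀ S : Set W, S.ncard < k → (H.induce Sᶜ).Connected

/-- The vertex connectivity `κ(H)`: the largest `k` such that `H` is `k`-connected. -/
noncomputable def kappa (H : SimpleGraph W) : ℕ :=
  sSup {k | IsKConnected H k}

/-- An edge-cut of `G`: a set of edges of `G` whose deletion disconnects `G`. -/
def IsEdgeCut (G : SimpleGraph V) (F : Set (Sym2 V)) : Prop :=
  F ⊆ G.edgeSet ∧ ¬ (G.deleteEdges F).Connected

/-- `G` is super edge-connected: every minimum-size edge-cut consists of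
all edges incident to a single vertex. -/
def SuperEdgeConnected (G : SimpleGraph V) : Prop :=
  ∀ F : Set (Sym2 V), IsEdgeCut G F →
    (∀ F' : Set (Sym2 V), IsEdgeCut G F' → F.ncard ≤ F'.ncard) →
    ∃ v : V, F = G.incidenceSet v

/-- `f_S(v) = deg_G(v) - deg_{⟨S⟩_G}(v)`. -/
noncomputable def fS (G : SimpleGraph V) (S : Set V) (v : V) : ℕ :=
  (G.neighborSet v).ncard - (G.neighborSet v ∩ S).ncard

/-- `ζ(S)`: the minimum of `f_S(u) + f_S(v)` over edges `uv` of `⟨S⟩_G`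
(`⊤` if there is no such edge). -/
noncomputable def zeta (G : SimpleGraph V) (S : Set V) : ℕ∞ :=
  sInf {x : ℕ∞ | ∃ u ∈ S, ∃ v ∈ S, G.Adj u v ∧ x = ((fS G S u + fS G S v : ℕ) : ℕ∞)}

/-- A star: a tree with at most one vertex of degree at least 2. -/
def IsStar (H : SimpleGraph W) : Prop :=
  H.IsTree ∧ (internalVerts H).Subsingleton

/-- `S` is a star-subset of `V(G)`: every connected component of the induced
subgraph `⟨S⟩_G` is a star (vacuously true for `S = ∅`). -/
def IsStarSubset (G : SimpleGraph V) (S : Set V) : Prop :=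
  ∀ C : (G.induce S).ConnectedComponent, IsStar ((G.induce S).induce C.supp)

/-- `τ'(G)`: the maximum over proper star-subsets `S ⊊ V(G)` of
`min (τ(G - S)) (ζ(S))`. -/
noncomputable def tauPrime (G : SimpleGraph V) : ℕ :=
  sSup {m | ∃ S : Set V, S ≠ Set.univ ∧ IsStarSubset G S ∧
    m = (min ((tau (G.induce Sᶜ) : ℕ∞)) (zeta G S)).toNat}

/-- A connected dominating set of `G`. -/
def IsConnDomSet (G : SimpleGraph V) (S : Set V) : Prop :=
  S.Nonempty ∧ (G.induce S).Connected ∧ ∀ v ∉ S, ∃ u ∈ S, G.Adj v u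

/-- `γ_c(G)`: the minimum cardinality of a connected dominating set of `G`. -/
noncomputable def gammaC (G : SimpleGraph V) : ℕ :=
  sInf {n | ∃ S : Set V, IsConnDomSet G S ∧ S.ncard = n}

/-- The bipartite subgraph `⟨A, B⟩_G` of `G` induced by the partite sets `A` and `B`:
its vertex set is `A ∪ B` and its edges are the edges of `G` with one endpoint in `A`
and the other in `B`. -/
def bipartiteBetween (G : SimpleGraph V) (A B : Set V) : SimpleGraph ↥(A ∪ B) where
  Adj u v := G.Adj ↑u ↑v ∧ (((u : V) ∈ A ∧ (v : V) ∈ B) ∨ ((u : V) ∈ B ∧ (v : V) ∈ A))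
  symm := by
    constructor
    rintro u v ⟨h, hc | hc⟩
    · exact ⟨h.symm, Or.inr ⟨hc.2, hc.1⟩⟩
    · exact ⟨h.symm, Or.inl ⟨hc.2, hc.1⟩⟩
  loopless := by
    constructor
    rintro u ⟨h, -⟩
    exact G.irrefl h

/-- Every connected component of `H` contains a cycle. -/
def EveryComponentHasCycle (H : SimpleGraph W) : Prop :=
  ∀ C : H.ConnectedComponent, ∃ v : W, H.connectedComponentMk v = C ∧
    ∃ p : H.Walk v v, p.IsCycle

/-- `H` is a path graph: a tree in which every vertex has degree at most 2. -/
def IsPathGraph (H : SimpleGraph W) : Prop :=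
  H.IsTree ∧ ∀ v : W, (H.neighborSet v).ncard ≤ 2

end CISTPaper


namespace CISTPaper

open SimpleGraph Walk

variable {V : Type*}

lemma adj_getVert_one_of_ne {T : SimpleGraph V} {a b : V} (p : T.Walk a b) (h : a ≠ b) :
    T.Adj a (p.getVert 1) ∧ p.getVert 1 ∈ p.support.tail := by
  have hnil : ¬ p.Nil := Walk.not_nil_of_ne h
  refine ⟨Walk.adj_snd (p := p) hnil, ?_⟩
  have h2 : p.support.tail = p.tail.support := by
    rw [← Walk.cons_support_tail hnil, List.tail_cons]
  exact h2 ▸ p.tail.start_mem_support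

lemma internal_of_mem_support {T : SimpleGraph V} [Fintype V] {a b x : V}
    (p : T.Walk a b) (hp : p.IsPath) (hx : x ∈ p.support) (hxa : x ≠ a) (hxb : x ≠ b) :
    x ∈ internalVerts T := by
  classical
  set q := p.takeUntil x hx with hq
  set r := p.dropUntil x hx with hr
  have hspec : q.append r = p := p.take_spec hx
  obtain ⟨ha, hamem⟩ := adj_getVert_one_of_ne q.reverse hxa
  obtain ⟨hb, hbmem⟩ := adj_getVert_one_of_ne r hxb
  have hamem' : q.reverse.getVert 1 ∈ q.support := by
    have h' := List.mem_of_mem_tail hamem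
    rwa [Walk.support_reverse, List.mem_reverse] at h'
  have hnodup : (q.support ++ r.support.tail).Nodup := by
    have h' := hp.support_nodup
    rw [← hspec, Walk.support_append] at h'
    exact h'
  have hne : q.reverse.getVert 1 ≠ r.getVert 1 := by
    intro hEq
    exact (List.disjoint_of_nodup_append hnodup) hamem' (hEq ▸ hbmem)
  show 2 ≤ (T.neighborSet x).ncard
  have : 1 < (T.neighborSet x).ncard :=
    (Set.one_lt_ncard (Set.toFinite _)).mpr ⟨_, ha, _, hb, hne⟩
  omega

lemma exists_adj_of_walk {T : SimpleGraph V} {w u : V} (p : T.Walk w u) (h : w ≠ u) :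
    ∃ a, T.Adj u a ∧ a ∈ p.support := by
  obtain ⟨ha, hmem⟩ := adj_getVert_one_of_ne p.reverse (Ne.symm h)
  refine ⟨_, ha, ?_⟩
  have h' := List.mem_of_mem_tail hmem
  rwa [Walk.support_reverse, List.mem_reverse] at h'

lemma exists_internal_neighbor {T : SimpleGraph V} [Fintype V] (hT : T.IsTree)
    (h3 : 3 ≤ Fintype.card V) {v : V} (hv : v ∉ internalVerts T) :
    ∃ u, T.Adj v u ∧ u ∈ internalVerts T := by
  classical
  have hcard1 : 1 < Fintype.card V := by omega
  obtain ⟨w, hw⟩ := Fintype.exists_ne_of_one_lt_card hcard1 v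
  obtain ⟨p0⟩ := hT.isConnected.preconnected w v
  obtain ⟨u, hu, humem⟩ := exists_adj_of_walk (p0.toPath : T.Walk w v) hw
  have hvu : v ≠ u := (hu.ne)
  have hz : ∃ z, z ≠ u ∧ z ≠ v := by
    by_contra hcon
    push_neg at hcon
    have hsub : (Finset.univ : Finset V) ⊆ {u, v} := by
      intro z _
      rcases eq_or_ne z u with rfl | hzu
      · simp
      · simp [hcon z hzu]
    have h2 : (Finset.univ : Finset V).card ≤ ({u, v} : Finset V).card :=
      Finset.card_le_card hsub
    have h2' : ({u, v} : Finset V).card ≤ 2 :=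
      (Finset.card_insert_le _ _).trans (by simp)
    rw [Finset.card_univ] at h2
    omega
  obtain ⟨z, hzu, hzv⟩ := hz
  obtain ⟨q0⟩ := hT.isConnected.preconnected z u
  obtain ⟨c, hc, hcmem⟩ := exists_adj_of_walk (q0.toPath : T.Walk z u) hzu
  by_cases hcv : c = v
  · exfalso
    subst hcv
    exact hv (internal_of_mem_support _ q0.toPath.2 hcmem (Ne.symm hzv) hvu)
  · refine ⟨u, hu, ?_⟩
    show 2 ≤ (T.neighborSet u).ncard
    have h1 : 1 < (T.neighborSet u).ncard :=
      (Set.one_lt_ncard (Set.toFinite _)).mpr ⟨v, hu.symm, c, hc, fun h => hcv h.symm⟩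
    omega

lemma internal_CDS {T G : SimpleGraph V} [Fintype V] (hle : T ≤ G) (hT : T.IsTree)
    (h3 : 3 ≤ Fintype.card V) : IsConnDomSet G (internalVerts T) := by
  classical
  have hTc := hT.isConnected
  have hne : (internalVerts T).Nonempty := by
    have hnV : Nonempty V := Fintype.card_pos_iff.mp (by omega)
    obtain ⟨v⟩ := hnV
    by_cases hv : v ∈ internalVerts T
    · exact ⟨v, hv⟩
    · obtain ⟨u, _, hu⟩ := exists_internal_neighbor hT h3 hv
      exact ⟨u, hu⟩
  obtain ⟨u0, hu0⟩ := hne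
  refine ⟨⟨u0, hu0⟩, ?_, ?_⟩
  · apply SimpleGraph.induce_connected_of_patches u0 hu0
    intro v hv
    obtain ⟨p0⟩ := hTc.preconnected u0 v
    set p : T.Walk u0 v := (p0.toPath : T.Walk u0 v) with hpdef
    have hps : ∀ x ∈ p.support, x ∈ internalVerts T := by
      intro x hx
      rcases eq_or_ne x u0 with rfl | hxu
      · exact hu0
      rcases eq_or_ne x v with rfl | hxv
      · exact hv
      exact internal_of_mem_support p p0.toPath.2 hx hxu hxv
    refine ⟨{x | x ∈ p.support}, hps, p.start_mem_support, p.end_mem_support, ?_⟩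
    have hr : (T.induce {x | x ∈ p.support}).Reachable ⟨u0, p.start_mem_support⟩
        ⟨v, p.end_mem_support⟩ :=
      (p.connected_induce_support).preconnected _ _
    exact hr.mono (fun a b hab => hle hab)
  · intro v hv
    obtain ⟨u, hadj, hu⟩ := exists_internal_neighbor hT h3 hv
    exact ⟨u, hu, hle hadj⟩

lemma hasCIST_zero (G : SimpleGraph V) : HasCIST G 0 :=
  ⟨Fin.elim0, fun i => i.elim0, fun i => i.elim0⟩

lemma hasCIST_bound {G : SimpleGraph V} [Fintype V]
    (h3 : 3 ≤ Fintype.card V) {k : ℕ} (h : HasCIST G k) :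
    k * gammaC G ≤ Fintype.card V := by
  classical
  obtain ⟨T, hsp, hdisj⟩ := h
  have hCDS : ∀ i, IsConnDomSet G (internalVerts (T i)) :=
    fun i => internal_CDS (hsp i).1 (hsp i).2 h3
  have hγ : ∀ i, gammaC G ≤ (internalVerts (T i)).ncard :=
    fun i => Nat.sInf_le ⟨_, hCDS i, rfl⟩
  calc k * gammaC G = ∑ _i : Fin k, gammaC G := by simp [mul_comm]
    _ ≤ ∑ i : Fin k, (internalVerts (T i)).toFinset.card := by
        apply Finset.sum_le_sum
        intro i _
        rw [← Set.ncard_eq_toFinset_card']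
        exact hγ i
    _ = (Finset.univ.biUnion fun i => (internalVerts (T i)).toFinset).card := by
        rw [Finset.card_biUnion]
        intro i _ j _ hij
        rw [Function.onFun, Set.disjoint_toFinset]
        exact (hdisj i j hij).2
    _ ≤ Fintype.card V := Finset.card_le_univ _

lemma univ_CDS {G : SimpleGraph V} (hG : G.Connected) : IsConnDomSet G Set.univ := by
  have hnV : Nonempty V := hG.nonempty
  exact ⟨Set.univ_nonempty, (induceUnivIso G).connected_iff.mpr hG,
    fun v hv => absurd trivial hv⟩

lemma gammaC_pos {G : SimpleGraph V} [Fintype V] (hG : G.Connected) : 0 < gammaC G := by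
  have hne : {n | ∃ S, IsConnDomSet G S ∧ S.ncard = n}.Nonempty :=
    ⟨_, Set.univ, univ_CDS hG, rfl⟩
  obtain ⟨S, hS, hcard⟩ := Nat.sInf_mem hne
  show 0 < sInf {n | ∃ S, IsConnDomSet G S ∧ S.ncard = n}
  rw [← hcard]
  exact (Set.ncard_pos (Set.toFinite S)).mpr hS.1

lemma gammaC_le_card {G : SimpleGraph V} [Fintype V] (hG : G.Connected) :
    gammaC G ≤ Fintype.card V :=
  Nat.sInf_le ⟨Set.univ, univ_CDS hG, by
    rw [Set.ncard_univ, Nat.card_eq_fintype_card]⟩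

lemma hasCIST_of_card_one {G : SimpleGraph V} [Fintype V] (h1 : Fintype.card V = 1)
    (k : ℕ) : HasCIST G k := by
  have hss : Subsingleton V := Fintype.card_le_one_iff_subsingleton.mp (by omega)
  have hnV : Nonempty V := Fintype.card_pos_iff.mp (by omega)
  have hbotconn : (⊥ : SimpleGraph V).Connected := by
    rw [connected_iff]
    refine ⟨fun a b => ?_, hnV⟩
    rw [Subsingleton.elim a b]
  have htree : (⊥ : SimpleGraph V).IsTree := ⟨hbotconn, isAcyclic_bot⟩
  have hint : internalVerts (⊥ : SimpleGraph V) = ∅ := by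
    ext v
    have hns : (⊥ : SimpleGraph V).neighborSet v = ∅ := by
      ext w
      simp [SimpleGraph.mem_neighborSet]
    simp [internalVerts, hns]
  refine ⟨fun _ => ⊥, fun _ => ⟨bot_le, htree⟩, fun i j _ => ⟨?_, ?_⟩⟩
  · simp
  · rw [hint]
    simp

lemma hasCIST_le_one_of_card_two {G : SimpleGraph V} [Fintype V]
    (h2 : Fintype.card V = 2) {k : ℕ} (h : HasCIST G k) : k ≤ 1 := by
  classical
  by_contra hk
  push_neg at hk
  obtain ⟨T, hsp, hdisj⟩ := h
  obtain ⟨u, v, huv, huniv⟩ := Finset.card_eq_two.mp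
    (show (Finset.univ : Finset V).card = 2 by rw [Finset.card_univ, h2])
  have hall : ∀ w : V, w = u ∨ w = v := by
    intro w
    have : w ∈ (Finset.univ : Finset V) := Finset.mem_univ w
    rw [huniv] at this
    simpa using this
  have hadj : ∀ i : Fin k, (T i).Adj u v := by
    intro i
    obtain ⟨p⟩ := (hsp i).2.isConnected.preconnected u v
    have hnil : ¬ p.Nil := Walk.not_nil_of_ne huv
    have h1 : (T i).Adj u (p.getVert 1) := Walk.adj_snd (p := p) hnil
    rcases hall (p.getVert 1) with hEq | hEq
    · exact absurd hEq h1.ne'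
    · rwa [hEq] at h1
  have hne : (⟨0, by omega⟩ : Fin k) ≠ ⟨1, by omega⟩ := by
    simp [Fin.ext_iff]
  have hd := (hdisj _ _ hne).1
  exact Set.disjoint_left.mp hd ((T _).mem_edgeSet.mpr (hadj ⟨0, by omega⟩))
    ((T _).mem_edgeSet.mpr (hadj ⟨1, by omega⟩))

end CISTPaper

namespace CISTPaper

/-- For every finite connected simple graph `G`,
`τ*(G) ≤ ⌊|V(G)| / γ_c(G)⌋`. -/
theorem stmt_11 {V : Type*} [Fintype V] (G : SimpleGraph V) (hG : G.Connected) :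
    tauStar G ≤ Fintype.card V / gammaC G := by
  classical
  have hnV : Nonempty V := hG.nonempty
  have h1 : 1 ≤ Fintype.card V := Fintype.card_pos
  have hγpos := gammaC_pos hG
  have hγle := gammaC_le_card hG
  by_cases h3 : 3 ≤ Fintype.card V
  · refine csSup_le ⟨0, hasCIST_zero G⟩ ?_
    intro k hk
    rw [Nat.le_div_iff_mul_le hγpos]
    exact hasCIST_bound h3 hk
  · have hcases : Fintype.card V = 1 ∨ Fintype.card V = 2 := by omega
    rcases hcases with h1' | h2
    · have hnb : ¬ BddAbove {k | HasCIST G k} := by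
        rintro ⟨m, hm⟩
        have : m + 1 ≤ m := hm (hasCIST_of_card_one h1' (m + 1))
        omega
      show sSup {k | HasCIST G k} ≤ _
      rw [csSup_of_not_bddAbove hnb, csSup_empty]
      exact Nat.zero_le _
    · refine csSup_le ⟨0, hasCIST_zero G⟩ ?_
      intro k hk
      have hk1 : k ≤ 1 := hasCIST_le_one_of_card_two h2 hk
      have hdiv : 1 ≤ Fintype.card V / gammaC G :=
        (Nat.one_le_div_iff hγpos).mpr hγle
      omega


end CISTPaper
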